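/- If h : Γ → ℝ≥0 is ∞-harmonic (with respect to the truncated kernels μ̄_x), then the function f : ST → ℝ≥0 defined by f((x,m)) = h(x) if m = |x|_μ and f((x,m)) = 0 otherwise, is space-time harmonic. -/
import Mathlib


open Filter Topology
open scoped Classical

/-- n-fold convolution power of a measure `μ` on a group, with `μ^{*0} = δ_e`. -/
noncomputable def convPow {G : Type*} [Group G] (μ : G → ℝ) : ℕ → G → ℝ
  | 0 => fun x => if x = 1 then 1 else 0
  | n + 1 => fun x => ∑ᶠ y, convPow μ n y * μ (y⁻¹ * x)

/-- The word semi-norm `|x|_μ = inf {n : μ^{*n}(x) > 0}`. -/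
noncomputable def munorm {G : Type*} [Group G] (μ : G → ℝ) (x : G) : ℕ :=
  sInf {n | 0 < convPow μ n x}

/-- A function on the space-time set `ST = {(x,m) : P^m(e,x) > 0}` is space-time
harmonic if `f((x,m)) = Σ_y μ(x⁻¹y) f((y,m+1))` at every point of `ST`. -/
def STHarmonic {G : Type*} [Group G] (μ : G → ℝ) (f : G × ℕ → ℝ) : Prop :=
  ∀ (x : G) (m : ℕ), 0 < convPow μ m x →
    f (x, m) = ∑ᶠ y : G, μ (x⁻¹ * y) * f (y, m + 1)

/-- The truncated sub-Markov kernel `μ̄_x(y)`. -/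
noncomputable def truncKernel {G : Type*} [Group G] (μ : G → ℝ) (x y : G) : ℝ :=
  if munorm μ y = munorm μ x + 1 then μ (x⁻¹ * y) else 0

/-- `h` is ∞-harmonic: `h(x) = Σ_y μ̄_x(y) h(y)`. -/
def InfHarmonic {G : Type*} [Group G] (μ : G → ℝ) (h : G → ℝ) : Prop :=
  ∀ x : G, h x = ∑ᶠ y : G, truncKernel μ x y * h y

lemma convPow_nonneg {G : Type*} [Group G] (μ : G → ℝ) (hnn : ∀ x, 0 ≤ μ x) :
    ∀ n x, 0 ≤ convPow μ n x := by
  intro n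
  induction n with
  | zero => intro x; simp only [convPow]; split <;> norm_num
  | succ n ih =>
    intro x
    simp only [convPow]
    exact finsum_nonneg fun y => mul_nonneg (ih y) (hnn _)

lemma convPow_support_finite {G : Type*} [Group G] (μ : G → ℝ)
    (hfin : (Function.support μ).Finite) :
    ∀ n, (Function.support (convPow μ n)).Finite := by
  intro n
  induction n with
  | zero =>
    apply Set.Finite.subset (Set.finite_singleton (1 : G))
    intro x hx
    simp only [convPow, Function.mem_support, ne_eq] at hx
    by_contra hne
    simp only [Set.mem_singleton_iff] at hne
    simp [hne] at hx
  | succ n ih =>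
    apply Set.Finite.subset (Set.Finite.mul ih hfin)
    intro x hx
    simp only [convPow, Function.mem_support, ne_eq] at hx
    have : ∃ y, convPow μ n y * μ (y⁻¹ * x) ≠ 0 := by
      by_contra hall
      push_neg at hall
      exact hx (finsum_eq_zero_of_forall_eq_zero hall)
    obtain ⟨y, hy⟩ := this
    have h1 : convPow μ n y ≠ 0 := fun h0 => hy (by simp [h0])
    have h2 : μ (y⁻¹ * x) ≠ 0 := fun h0 => hy (by simp [h0])
    exact ⟨y, h1, y⁻¹ * x, h2, by group⟩

lemma convPow_step {G : Type*} [Group G] (μ : G → ℝ) (hnn : ∀ x, 0 ≤ μ x)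
    (hfin : (Function.support μ).Finite) {n : ℕ} {x y : G}
    (hx : 0 < convPow μ n x) (hμ : 0 < μ (x⁻¹ * y)) :
    0 < convPow μ (n + 1) y := by
  have hsupp : (Function.support fun z => convPow μ n z * μ (z⁻¹ * y)).Finite := by
    apply Set.Finite.subset (convPow_support_finite μ hfin n)
    intro z hz
    simp only [Function.mem_support, ne_eq] at hz ⊢
    exact fun h0 => hz (by simp [h0])
  have hle : convPow μ n x * μ (x⁻¹ * y) ≤ ∑ᶠ z, convPow μ n z * μ (z⁻¹ * y) :=
    single_le_finsum x hsupp fun z => mul_nonneg (convPow_nonneg μ hnn n z) (hnn _)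
  calc (0 : ℝ) < convPow μ n x * μ (x⁻¹ * y) := mul_pos hx hμ
    _ ≤ _ := hle
  -- conclude
  -- `convPow μ (n+1) y` definitionally equals the finsum

lemma munorm_spec {G : Type*} [Group G] (μ : G → ℝ)
    (hadm : ∀ x : G, ∃ n, 0 < convPow μ n x) (x : G) :
    0 < convPow μ (munorm μ x) x :=
  Nat.sInf_mem (hadm x)

theorem infty_harmonic_gives_spaceTime_harmonic
    {G : Type*} [Group G] [Countable G] (μ : G → ℝ)
    (hnn : ∀ x, 0 ≤ μ x) (hprob : ∑ᶠ x, μ x = 1)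
    (hfin : (Function.support μ).Finite) (hlazy : 0 < μ 1)
    (hadm : ∀ x : G, ∃ n, 0 < convPow μ n x)
    (h : G → ℝ) (hh0 : ∀ x, 0 ≤ h x) (hh : InfHarmonic μ h) :
    STHarmonic μ (fun p => if p.2 = munorm μ p.1 then h p.1 else 0) := by
  intro x m hm
  simp only
  have hkey : ∀ y : G, 0 < μ (x⁻¹ * y) → munorm μ y ≤ munorm μ x + 1 := by
    intro y hμ
    exact Nat.sInf_le (convPow_step μ hnn hfin (munorm_spec μ hadm x) hμ)
  by_cases hx : m = munorm μ x
  · rw [if_pos hx, hh x]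
    apply finsum_congr
    intro y
    rw [truncKernel]
    by_cases hy : munorm μ y = munorm μ x + 1
    · rw [if_pos hy, if_pos (by omega)]
    · rw [if_neg hy, if_neg (by omega), zero_mul, mul_zero]
  · rw [if_neg hx]
    symm
    apply finsum_eq_zero_of_forall_eq_zero
    intro y
    by_cases hμ : 0 < μ (x⁻¹ * y)
    · have h1 : munorm μ y ≤ munorm μ x + 1 := hkey y hμ
      have h2 : munorm μ x ≤ m := Nat.sInf_le hm
      rw [if_neg (by omega), mul_zero]
    · have : μ (x⁻¹ * y) = 0 := le_antisymm (not_lt.mp hμ) (hnn _)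
      rw [this, zero_mul]
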